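/- For any nonnegative square matrix A and indices i,j, we have (Ā^n)_{i,j}^2 ≤ (A^n)_{i,j} · (A^n)_{j,i}, where Ā(i,j) = sqrt(A(i,j)·A(j,i)). (This is the Cauchy–Schwarz step: the square of the sum over walks of geometric means of forward and backward walk weights is at most the product of the total forward and backward walk weights.) -/
import Mathlib


theorem stmt3 {n : ℕ} (A : Matrix (Fin n) (Fin n) ℝ) (hA : ∀ i j, 0 ≤ A i j)
    (k : ℕ) (i j : Fin n) :
    (((Matrix.of fun a b => Real.sqrt (A a b * A b a)) ^ k) i j) ^ 2 ≤
      (A ^ k) i j * (A ^ k) j i := by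
  set B : Matrix (Fin n) (Fin n) ℝ :=
    Matrix.of fun a b => Real.sqrt (A a b * A b a) with hBdef
  have hAk : ∀ m (a b : Fin n), 0 ≤ (A ^ m) a b := by
    intro m
    induction m with
    | zero => intro a b; simp [Matrix.one_apply]; split <;> norm_num
    | succ m ih =>
      intro a b
      rw [pow_succ, Matrix.mul_apply]
      exact Finset.sum_nonneg fun l _ => mul_nonneg (ih a l) (hA l b)
  have hBk : ∀ m (a b : Fin n), 0 ≤ (B ^ m) a b := by
    intro m
    induction m with
    | zero => intro a b; simp [Matrix.one_apply]; split <;> norm_num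
    | succ m ih =>
      intro a b
      rw [pow_succ, Matrix.mul_apply]
      exact Finset.sum_nonneg fun l _ =>
        mul_nonneg (ih a l) (Real.sqrt_nonneg _)
  induction k generalizing i j with
  | zero =>
    rcases eq_or_ne i j with h | h <;> simp [Matrix.one_apply, h]
  | succ m ih =>
    -- key pointwise bound : (B^m) a b ≤ sqrt ((A^m) a b * (A^m) b a)
    have hle : ∀ a b : Fin n, (B ^ m) a b ≤ Real.sqrt ((A ^ m) a b * (A ^ m) b a) := by
      intro a b
      have := ih a b
      nlinarith [hBk m a b, Real.sq_sqrt (mul_nonneg (hAk m a b) (hAk m b a)),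
        Real.sqrt_nonneg ((A ^ m) a b * (A ^ m) b a)]
    have key : (B ^ (m + 1)) i j ≤
        ∑ l, Real.sqrt ((A i l * (A ^ m) l j) * (A l i * (A ^ m) j l)) := by
      rw [pow_succ', Matrix.mul_apply]
      refine Finset.sum_le_sum fun l _ => ?_
      have h1 : B i l = Real.sqrt (A i l * A l i) := rfl
      calc B i l * (B ^ m) l j
          ≤ Real.sqrt (A i l * A l i) * Real.sqrt ((A ^ m) l j * (A ^ m) j l) := by
            rw [h1]
            exact mul_le_mul_of_nonneg_left (hle l j) (Real.sqrt_nonneg _)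
        _ = Real.sqrt ((A i l * A l i) * ((A ^ m) l j * (A ^ m) j l)) :=
            (Real.sqrt_mul (mul_nonneg (hA i l) (hA l i)) _).symm
        _ = Real.sqrt ((A i l * (A ^ m) l j) * (A l i * (A ^ m) j l)) := by ring_nf
    have cauchy : (∑ l, Real.sqrt ((A i l * (A ^ m) l j) * (A l i * (A ^ m) j l))) ^ 2 ≤
        (∑ l, A i l * (A ^ m) l j) * ∑ l, A l i * (A ^ m) j l := by
      refine Finset.sum_sq_le_sum_mul_sum_of_sq_eq_mul _
        (fun l _ => mul_nonneg (hA i l) (hAk m l j))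
        (fun l _ => mul_nonneg (hA l i) (hAk m j l))
        (fun l _ => Real.sq_sqrt (mul_nonneg (mul_nonneg (hA i l) (hAk m l j))
          (mul_nonneg (hA l i) (hAk m j l))))
    have e1 : (A ^ (m + 1)) i j = ∑ l, A i l * (A ^ m) l j := by
      rw [pow_succ', Matrix.mul_apply]
    have e2 : (A ^ (m + 1)) j i = ∑ l, A l i * (A ^ m) j l := by
      rw [pow_succ, Matrix.mul_apply]
      exact Finset.sum_congr rfl fun l _ => mul_comm _ _
    calc ((B ^ (m + 1)) i j) ^ 2
        ≤ (∑ l, Real.sqrt ((A i l * (A ^ m) l j) * (A l i * (A ^ m) j l))) ^ 2 :=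
          pow_le_pow_left₀ (hBk _ i j) key 2
      _ ≤ (A ^ (m + 1)) i j * (A ^ (m + 1)) j i := by rw [e1, e2]; exact cauchy
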